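/- Let w₁, w₂ be positive C² functions on an open set Ω ⊆ ℝⁿ, and for a positive C² function w define the matrix-valued function A_w := ∇²w − (|∇w|²/(2w))·I. Then at every point of Ω, the matrix A_{(w₁+w₂)/2} − ½(A_{w₁} + A_{w₂}) is positive semidefinite. -/

import Mathlib

open Real

/-- Quadratic form of the matrix `A_w = ∇²w − (|∇w|²/(2w))·I` applied to `v`. -/
noncomputable def conformalHessianForm {n : ℕ}
    (w : EuclideanSpace ℝ (Fin n) → ℝ) (x v : EuclideanSpace ℝ (Fin n)) : ℝ :=
  iteratedFDeriv ℝ 2 w x ![v, v] - ‖gradient w x‖ ^ 2 / (2 * w x) * ‖v‖ ^ 2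

/-- Convexity of the conformal Hessian: at every point of `Ω`, the matrix
`A_{(w₁+w₂)/2} − ½(A_{w₁} + A_{w₂})` is positive semidefinite. -/
theorem stmt_0 {n : ℕ} (Ω : Set (EuclideanSpace ℝ (Fin n))) (hΩ : IsOpen Ω)
    (w₁ w₂ : EuclideanSpace ℝ (Fin n) → ℝ)
    (hw₁ : ContDiffOn ℝ 2 w₁ Ω) (hw₂ : ContDiffOn ℝ 2 w₂ Ω)
    (hw₁pos : ∀ x ∈ Ω, 0 < w₁ x) (hw₂pos : ∀ x ∈ Ω, 0 < w₂ x) :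
    ∀ x ∈ Ω, ∀ v : EuclideanSpace ℝ (Fin n),
      0 ≤ conformalHessianForm (fun y => (w₁ y + w₂ y) / 2) x v
          - (conformalHessianForm w₁ x v + conformalHessianForm w₂ x v) / 2 := by
  intro x hx v
  have hUD : UniqueDiffOn ℝ Ω := hΩ.uniqueDiffOn
  have hw₁x : ContDiffAt ℝ 2 w₁ x := hw₁.contDiffAt (hΩ.mem_nhds hx)
  have hw₂x : ContDiffAt ℝ 2 w₂ x := hw₂.contDiffAt (hΩ.mem_nhds hx)
  have hd₁ : DifferentiableAt ℝ w₁ x := hw₁x.differentiableAt two_ne_zero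
  have hd₂ : DifferentiableAt ℝ w₂ x := hw₂x.differentiableAt two_ne_zero
  set g₁ := gradient w₁ x with hg₁
  set g₂ := gradient w₂ x with hg₂
  have efun : (fun y => (w₁ y + w₂ y) / 2) = (2⁻¹ : ℝ) • (w₁ + w₂) := by
    funext y
    simp [Pi.smul_apply, smul_eq_mul]
    ring
  -- Hessian identity
  have hH : iteratedFDeriv ℝ 2 (fun y => (w₁ y + w₂ y) / 2) x ![v, v]
      = 2⁻¹ * (iteratedFDeriv ℝ 2 w₁ x ![v, v] + iteratedFDeriv ℝ 2 w₂ x ![v, v]) := by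
    have h1 : iteratedFDeriv ℝ 2 (fun y => (w₁ y + w₂ y) / 2) x
        = (2⁻¹ : ℝ) • (iteratedFDeriv ℝ 2 w₁ x + iteratedFDeriv ℝ 2 w₂ x) := by
      rw [efun, ← iteratedFDerivWithin_of_isOpen (f := (2⁻¹ : ℝ) • (w₁ + w₂)) 2 hΩ hx,
        iteratedFDerivWithin_const_smul_apply (f := w₁ + w₂) ((hw₁ x hx).add (hw₂ x hx)) hUD hx,
        iteratedFDerivWithin_add_apply (hw₁ x hx) (hw₂ x hx) hUD hx,
        iteratedFDerivWithin_of_isOpen (f := w₁) 2 hΩ hx,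
        iteratedFDerivWithin_of_isOpen (f := w₂) 2 hΩ hx]
    rw [h1]
    simp [ContinuousMultilinearMap.add_apply, smul_eq_mul]
    ring
  -- gradient identity
  have hG : gradient (fun y => (w₁ y + w₂ y) / 2) x = (2⁻¹ : ℝ) • (g₁ + g₂) := by
    have e : fderiv ℝ (fun y => (w₁ y + w₂ y) / 2) x
        = (2⁻¹ : ℝ) • (fderiv ℝ w₁ x + fderiv ℝ w₂ x) := by
      have e2 : (fun y => (w₁ y + w₂ y) / 2) = fun y => (2⁻¹ : ℝ) • (w₁ y + w₂ y) := by
        funext y; simp [smul_eq_mul]; ring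
      rw [e2, fderiv_fun_const_smul (f := fun y => w₁ y + w₂ y) (hd₁.add hd₂), fderiv_fun_add hd₁ hd₂]
    simp only [gradient, hg₁, hg₂, e, map_smul, map_add]
  have hGnorm : ‖gradient (fun y => (w₁ y + w₂ y) / 2) x‖ ≤ (‖g₁‖ + ‖g₂‖) / 2 := by
    rw [hG, norm_smul]
    have := norm_add_le g₁ g₂
    simp only [norm_inv, Real.norm_ofNat]
    nlinarith [norm_nonneg (g₁ + g₂)]
  set G := ‖gradient (fun y => (w₁ y + w₂ y) / 2) x‖ with hGdef
  set a := ‖g₁‖; set b := ‖g₂‖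
  set s := w₁ x; set t := w₂ x
  have hs : 0 < s := hw₁pos x hx
  have ht : 0 < t := hw₂pos x hx
  have ha : 0 ≤ a := norm_nonneg _
  have hb : 0 ≤ b := norm_nonneg _
  have hGnn : 0 ≤ G := norm_nonneg _
  have hG2 : G ^ 2 ≤ ((a + b) / 2) ^ 2 := by
    apply pow_le_pow_left₀ hGnn hGnorm
  -- key scalar inequality
  have key : G ^ 2 / (2 * ((s + t) / 2)) ≤ (a ^ 2 / (2 * s) + b ^ 2 / (2 * t)) / 2 := by
    rw [div_add_div _ _ (by positivity) (by positivity), div_div,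
      div_le_div_iff₀ (by positivity) (by positivity)]
    nlinarith [sq_nonneg (a * t - b * s), mul_pos hs ht, sq_nonneg (a + b)]
  have hc : (0 : ℝ) ≤ ‖v‖ ^ 2 := by positivity
  have := mul_le_mul_of_nonneg_right key hc
  simp only [conformalHessianForm, hH]
  nlinarith [this]
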